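/- With \delta as in the stepping-up lemma, if \epsilon_1 < \epsilon_2 < ... < \epsilon_p in {0,1}^m (ordered by binary value), then there is a unique index i in {1,...,p-1} achieving the maximum of \delta(\epsilon_i, \epsilon_{i+1}). -/

import Mathlib

/-- The binary value of a 0/1 tuple: `b(ε) = ∑ γ_i 2^i` (coordinates indexed from 0). -/
def bval {m : ℕ} (ε : Fin m → Bool) : ℕ :=
  ∑ i : Fin m, if ε i then 2 ^ (i : ℕ) else 0

/-- `δ(ε, ε')`: the largest coordinate at which `ε` and `ε'` differ (as a natural number). -/
def delta {m : ℕ} (ε ε' : Fin m → Bool) : ℕ :=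
  (Finset.univ.filter (fun i : Fin m => ε i ≠ ε' i)).sup (fun i => (i : ℕ))

lemma bval_lt_of_top {m : ℕ} (ε ε' : Fin m → Bool) (d : Fin m)
    (h1 : ε d = false) (h2 : ε' d = true)
    (h3 : ∀ k : Fin m, (d : ℕ) < (k : ℕ) → ε k = ε' k) : bval ε < bval ε' := by
  classical
  unfold bval
  rw [← Finset.sum_filter_add_sum_filter_not Finset.univ (fun i : Fin m => (i : ℕ) ≤ (d : ℕ)),
      ← Finset.sum_filter_add_sum_filter_not Finset.univ (fun i : Fin m => (i : ℕ) ≤ (d : ℕ))]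
  have hC : ∑ i ∈ Finset.univ.filter (fun i : Fin m => ¬ (i : ℕ) ≤ (d : ℕ)),
      (if ε i then 2 ^ (i : ℕ) else 0)
      = ∑ i ∈ Finset.univ.filter (fun i : Fin m => ¬ (i : ℕ) ≤ (d : ℕ)),
      (if ε' i then 2 ^ (i : ℕ) else 0) := by
    apply Finset.sum_congr rfl
    intro k hk
    simp only [Finset.mem_filter, not_le] at hk
    rw [h3 k hk.2]
  rw [hC]
  apply Nat.add_lt_add_right
  have hA : ∑ i ∈ Finset.univ.filter (fun i : Fin m => (i : ℕ) ≤ (d : ℕ)),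
      (if ε i then 2 ^ (i : ℕ) else 0) < 2 ^ (d : ℕ) := by
    calc ∑ i ∈ Finset.univ.filter (fun i : Fin m => (i : ℕ) ≤ (d : ℕ)),
        (if ε i then 2 ^ (i : ℕ) else 0)
        ≤ ∑ i ∈ Finset.univ.filter (fun i : Fin m => (i : ℕ) < (d : ℕ)),
          2 ^ (i : ℕ) := by
          rw [← Finset.sum_filter_add_sum_filter_not
            (Finset.univ.filter (fun i : Fin m => (i : ℕ) ≤ (d : ℕ)))
            (fun i : Fin m => (i : ℕ) < (d : ℕ))]
          have h0 : ∑ i ∈ (Finset.univ.filter (fun i : Fin m => (i : ℕ) ≤ (d : ℕ))).filter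
              (fun i : Fin m => ¬ (i : ℕ) < (d : ℕ)), (if ε i then 2 ^ (i : ℕ) else 0) = 0 := by
            apply Finset.sum_eq_zero
            intro k hk
            simp only [Finset.mem_filter, not_lt] at hk
            have : k = d := Fin.ext (le_antisymm hk.1.2 hk.2)
            rw [this, h1]; simp
          have h0' : (Finset.univ.filter (fun i : Fin m => (i : ℕ) ≤ (d : ℕ))).filter
              (fun i : Fin m => (i : ℕ) < (d : ℕ))
              = Finset.univ.filter (fun i : Fin m => (i : ℕ) < (d : ℕ)) := by
            ext k; simp only [Finset.mem_filter, Finset.mem_univ, true_and]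
            exact ⟨fun h => h.2, fun h => ⟨le_of_lt h, h⟩⟩
          rw [h0, h0', Nat.add_zero]
          apply Finset.sum_le_sum
          intro i _; split <;> simp
      _ = ∑ k ∈ (Finset.univ.filter (fun i : Fin m => (i : ℕ) < (d : ℕ))).image Fin.val,
            2 ^ k := by
          rw [Finset.sum_image]
          intro a _ b _ h; exact Fin.ext h
      _ < 2 ^ (d : ℕ) := by
          apply Nat.geomSum_lt le_rfl
          intro k hk
          simp only [Finset.mem_image, Finset.mem_filter] at hk
          obtain ⟨a, ⟨_, ha⟩, rfl⟩ := hk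
          exact ha
  have hB : 2 ^ (d : ℕ) ≤ ∑ i ∈ Finset.univ.filter (fun i : Fin m => (i : ℕ) ≤ (d : ℕ)),
      (if ε' i then 2 ^ (i : ℕ) else 0) := by
    have hd : d ∈ Finset.univ.filter (fun i : Fin m => (i : ℕ) ≤ (d : ℕ)) := by simp
    have := Finset.single_le_sum (f := fun i : Fin m => if ε' i then 2 ^ (i : ℕ) else 0)
      (fun i _ => Nat.zero_le _) hd
    simpa [h2] using this
  exact lt_of_lt_of_le hA hB

lemma delta_spec {m : ℕ} (ε ε' : Fin m → Bool) (h : bval ε < bval ε') :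
    ∃ d : Fin m, (d : ℕ) = delta ε ε' ∧ ε d = false ∧ ε' d = true ∧
      ∀ k : Fin m, delta ε ε' < (k : ℕ) → ε k = ε' k := by
  classical
  set s := Finset.univ.filter (fun i : Fin m => ε i ≠ ε' i) with hs
  have hne : s.Nonempty := by
    by_contra hemp
    rw [Finset.not_nonempty_iff_eq_empty] at hemp
    have : ε = ε' := by
      funext k
      by_contra hk
      have : k ∈ s := by simp [hs, hk]
      simp [hemp] at this
    rw [this] at h; exact lt_irrefl _ h
  obtain ⟨d, hd, hsup⟩ := Finset.exists_mem_eq_sup s hne (fun i : Fin m => (i : ℕ))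
  have hagree : ∀ k : Fin m, delta ε ε' < (k : ℕ) → ε k = ε' k := by
    intro k hk
    by_contra hne'
    have hks : k ∈ s := by simp [hs, hne']
    have : (k : ℕ) ≤ delta ε ε' := Finset.le_sup hks
    omega
  have hdd : ε d ≠ ε' d := by
    have := hd; simp [hs] at this; exact this
  have hdelta : (d : ℕ) = delta ε ε' := hsup.symm
  have hcase : ε d = false ∧ ε' d = true := by
    rcases Bool.eq_false_or_eq_true (ε d) with h1 | h1 <;>
      rcases Bool.eq_false_or_eq_true (ε' d) with h2 | h2
    · exact absurd (h1.trans h2.symm) hdd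
    · exact absurd (bval_lt_of_top ε' ε d h2 h1
        (fun k hk => (hagree k (by omega : delta ε ε' < (k : ℕ))).symm)) (by omega)
    · exact ⟨h1, h2⟩
    · exact absurd (h1.trans h2.symm) hdd
  exact ⟨d, hdelta, hcase.1, hcase.2, hagree⟩

/-- If `ε₀ < ε₁ < ⋯ < ε_p` in `{0,1}^m` (ordered by binary value, `p ≥ 1`), then there is a
unique index `i` achieving the maximum of `δ(ε_i, ε_{i+1})`. -/
theorem delta_unique_max (m p : ℕ) (hp : 0 < p) (ε : Fin (p + 1) → Fin m → Bool)
    (hmono : ∀ i j : Fin (p + 1), i < j → bval (ε i) < bval (ε j)) :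
    ∃! i : Fin p, ∀ j : Fin p,
      delta (ε j.castSucc) (ε j.succ) ≤ delta (ε i.castSucc) (ε i.succ) := by
  classical
  set D : Fin p → ℕ := fun j => delta (ε j.castSucc) (ε j.succ) with hD
  have hstep : ∀ l : Fin p, bval (ε l.castSucc) < bval (ε l.succ) :=
    fun l => hmono _ _ Fin.castSucc_lt_succ
  -- key: no two distinct maxima
  have key : ∀ a b : Fin p, a < b → (∀ k, D k ≤ D a) → (∀ k, D k ≤ D b) → False := by
    intro a b hab ha hb
    have hDeq : D a = D b := le_antisymm (hb a) (ha b)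
    obtain ⟨da, hda, ha0, ha1, haag⟩ := delta_spec _ _ (hstep a)
    obtain ⟨db, hdb, hb0, hb1, hbag⟩ := delta_spec _ _ (hstep b)
    have hda' : (da : ℕ) = D a := by rw [hD]; exact hda
    have hdb' : (db : ℕ) = D b := by rw [hD]; exact hdb
    have hdd : da = db := Fin.ext (by rw [hda', hdb', hDeq])
    -- all coordinates above D a are constant along the chain
    have hconst : ∀ k : Fin m, (D a : ℕ) < (k : ℕ) → ∀ x y : Fin (p+1), x ≤ y →
        ε x k = ε y k := by
      intro k hk x y hxy
      have hstep' : ∀ l : Fin p, ε l.castSucc k = ε l.succ k := by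
        intro l
        obtain ⟨dl, hdl, _, _, hlag⟩ := delta_spec _ _ (hstep l)
        have hDl : D l = delta (ε l.castSucc) (ε l.succ) := by rw [hD]
        exact hlag k (by rw [← hDl]; exact lt_of_le_of_lt (ha l) hk)
      induction y using Fin.induction with
      | zero => rw [Fin.le_zero_iff] at hxy; rw [hxy]
      | succ j ih =>
        rcases eq_or_lt_of_le hxy with h | h
        · rw [h]
        · have hx : x ≤ j.castSucc := by
            rw [Fin.le_iff_val_le_val, Fin.coe_castSucc]
            rw [Fin.lt_iff_val_lt_val, Fin.val_succ] at h
            omega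
          rw [ih hx, hstep' j]
    -- a.succ ≤ b.castSucc
    have hle : (a.succ : Fin (p+1)) ≤ b.castSucc := by
      rw [Fin.le_iff_val_le_val, Fin.coe_castSucc, Fin.val_succ]
      have := Fin.lt_iff_val_lt_val.mp hab
      omega
    have hlt : bval (ε b.castSucc) < bval (ε a.succ) := by
      apply bval_lt_of_top _ _ da
      · rw [hdd]; exact hb0
      · exact ha1
      · intro k hk
        rw [hda'] at hk
        exact (hconst k hk a.succ b.castSucc hle).symm
    rcases eq_or_lt_of_le hle with h | h
    · rw [h] at hlt; exact lt_irrefl _ hlt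
    · exact absurd (hmono _ _ h) (by omega)
  obtain ⟨i, _, hi⟩ := Finset.exists_max_image Finset.univ D ⟨⟨0, hp⟩, Finset.mem_univ _⟩
  refine ⟨i, fun j => hi j (Finset.mem_univ j), ?_⟩
  intro y hy
  by_contra hne
  rcases lt_or_gt_of_ne hne with h | h
  · exact key y i h hy (fun k => hi k (Finset.mem_univ k))
  · exact key i y h (fun k => hi k (Finset.mem_univ k)) hy
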